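/- Let σ ∈ L^q([0,1]) be a spectral function (1 ≤ q ≤ ∞). Then for every Z with ‖Z‖_σ* < ∞, ‖Z‖_q ≤ ‖Z‖_σ* · ‖σ‖_q. Moreover if σ ∈ L^∞ then ‖Z‖_∞/‖σ‖_∞ ≤ ‖Z‖_σ* ≤ ‖Z‖_∞, so the dual space L_σ* equals L^∞ with equivalent norms. -/

import Mathlib

open MeasureTheory ENNReal

/-- The (left-continuous) quantile function of X: F_X^{-1}(p) = inf{y : P(X ≤ y) ≥ p}. -/
noncomputable def quantile {Ω : Type*} [MeasurableSpace Ω] (μ : Measure Ω)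
    (X : Ω → ℝ) (p : ℝ) : ℝ :=
  sInf {y : ℝ | p ≤ (μ {ω | X ω ≤ y}).toReal}

/-- The σ-norm ‖Y‖_σ = ∫₀¹ σ(u)·F_{|Y|}^{-1}(u) du, valued in [0,∞]. -/
noncomputable def sigmaNorm {Ω : Type*} [MeasurableSpace Ω] (μ : Measure Ω)
    (σ : ℝ → ℝ) (Y : Ω → ℝ) : ℝ≥0∞ :=
  ∫⁻ u in Set.Ioo (0 : ℝ) 1, ENNReal.ofReal (σ u * quantile μ (fun ω => |Y ω|) u)

/-- The Average Value-at-Risk at level α. -/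
noncomputable def avar {Ω : Type*} [MeasurableSpace Ω] (μ : Measure Ω)
    (X : Ω → ℝ) (α : ℝ) : ℝ :=
  (1 - α)⁻¹ * ∫ u in α..1, quantile μ X u

/-- The dual σ-norm ‖Z‖_σ* = inf{η ≥ 0 : AVaR_α(|Z|) ≤ (η/(1−α))∫_α¹ σ for all α ∈ [0,1)}. -/
noncomputable def sigmaDualNorm {Ω : Type*} [MeasurableSpace Ω] (μ : Measure Ω)
    (σ : ℝ → ℝ) (Z : Ω → ℝ) : ℝ :=
  sInf {η : ℝ | 0 ≤ η ∧ ∀ α ∈ Set.Ico (0 : ℝ) 1,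
    avar μ (fun ω => |Z ω|) α ≤ η / (1 - α) * ∫ u in α..1, σ u}

section Aux

open MeasureTheory ENNReal Set Filter

set_option linter.unusedSectionVars false

section Q
variable {Ω : Type*} [MeasurableSpace Ω] (μ : Measure Ω) [IsProbabilityMeasure μ] (X : Ω → ℝ)

lemma cdf_mono : Monotone (fun t => (μ {ω | X ω ≤ t}).toReal) := by
  intro a b hab
  exact ENNReal.toReal_mono (measure_ne_top _ _)
    (measure_mono (fun ω h => le_trans h hab))

lemma cdf_le_one (t : ℝ) : (μ {ω | X ω ≤ t}).toReal ≤ 1 := by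
  simpa using ENNReal.toReal_mono (measure_ne_top μ univ) (measure_mono (subset_univ _))

lemma cdf_nonneg (t : ℝ) : 0 ≤ (μ {ω | X ω ≤ t}).toReal := ENNReal.toReal_nonneg

variable {X}

lemma exists_cdf_ge {u : ℝ} (hu : u < 1) : ∃ y : ℝ, u ≤ (μ {ω | X ω ≤ y}).toReal := by
  have hm : Monotone (fun n : ℕ => {ω | X ω ≤ (n:ℝ)}) := by
    intro a b hab ω h
    simp only [mem_setOf_eq] at h ⊢
    exact le_trans h (by exact_mod_cast hab)
  have hU : (⋃ n : ℕ, {ω | X ω ≤ (n:ℝ)}) = univ := by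
    ext ω
    simp only [mem_iUnion, mem_univ, iff_true, mem_setOf_eq]
    obtain ⟨n, hn⟩ := exists_nat_ge (X ω)
    exact ⟨n, hn⟩
  have h1 : Tendsto (fun n : ℕ => μ {ω | X ω ≤ (n:ℝ)}) Filter.atTop (nhds 1) := by
    have := tendsto_measure_iUnion_atTop (μ := μ) hm
    rw [hU] at this
    simpa [Function.comp_def] using this
  have h2 : Tendsto (fun n : ℕ => (μ {ω | X ω ≤ (n:ℝ)}).toReal) Filter.atTop (nhds 1) := by
    have := (ENNReal.tendsto_toReal (by norm_num : (1:ℝ≥0∞) ≠ ⊤)).comp h1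
    simpa [Function.comp_def] using this
  have := h2.eventually_const_le hu
  obtain ⟨n, hn⟩ := this.exists
  exact ⟨n, hn⟩

lemma cdf_right_cont {t u : ℝ} (hX : Measurable X)
    (h : ∀ n : ℕ, u ≤ (μ {ω | X ω ≤ t + 1/(n+1)}).toReal) :
    u ≤ (μ {ω | X ω ≤ t}).toReal := by
  set s : ℕ → Set Ω := fun n => {ω | X ω ≤ t + 1/(n+1)} with hs
  have hanti : Antitone s := by
    intro a b hab ω h
    simp only [hs, mem_setOf_eq] at h ⊢
    have : (1:ℝ)/((b:ℝ)+1) ≤ 1/((a:ℝ)+1) := by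
      apply one_div_le_one_div_of_le (by positivity)
      have := (Nat.cast_le (α := ℝ)).2 hab; linarith
    linarith
  have hI : (⋂ n, s n) = {ω | X ω ≤ t} := by
    ext ω
    simp only [mem_iInter, hs, mem_setOf_eq]
    constructor
    · intro h
      by_contra hlt
      push_neg at hlt
      obtain ⟨n, hn⟩ := exists_nat_one_div_lt (show 0 < X ω - t by linarith)
      have := h n
      push_cast at this hn ⊢
      linarith
    · intro h n
      have : (0:ℝ) < 1/(n+1) := by positivity
      linarith
  have htend : Tendsto (fun n => μ (s n)) Filter.atTop (nhds (μ {ω | X ω ≤ t})) := by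
    have := tendsto_measure_iInter_atTop (μ := μ) (s := s)
      (fun n => (hX measurableSet_Iic).nullMeasurableSet) hanti ⟨0, measure_ne_top _ _⟩
    rw [hI] at this
    exact this
  have h2 : Tendsto (fun n => (μ (s n)).toReal) Filter.atTop (nhds ((μ {ω | X ω ≤ t}).toReal)) :=
    (ENNReal.tendsto_toReal (measure_ne_top _ _)).comp htend
  exact ge_of_tendsto h2 (Filter.Eventually.of_forall h)

lemma quantile_set_bddBelow (hX0 : ∀ ω, 0 ≤ X ω) (u : ℝ) (hu : 0 < u) :
    {y : ℝ | u ≤ (μ {ω | X ω ≤ y}).toReal} ⊆ Ici 0 := by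
  intro y hy
  by_contra hneg
  have : {ω | X ω ≤ y} = ∅ := by
    ext ω; simp only [mem_setOf_eq, mem_empty_iff_false, iff_false]
    have := hX0 ω; intro h; linarith [mem_Iio.mp (notMem_Ici.mp hneg)]
  have hy' : u ≤ (μ {ω | X ω ≤ y}).toReal := hy
  rw [this] at hy'
  simp at hy'
  linarith

lemma quantile_le_iff (hX : Measurable X) (hX0 : ∀ ω, 0 ≤ X ω) {u t : ℝ}
    (hu : u ∈ Ioo (0:ℝ) 1) :
    quantile μ X u ≤ t ↔ u ≤ (μ {ω | X ω ≤ t}).toReal := by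
  set S := {y : ℝ | u ≤ (μ {ω | X ω ≤ y}).toReal} with hS
  have hne : S.Nonempty := exists_cdf_ge μ hu.2
  have hbdd : BddBelow S := ⟨0, quantile_set_bddBelow μ hX0 u hu.1⟩
  constructor
  · intro h
    apply cdf_right_cont μ hX
    intro n
    have hpos : (0:ℝ) < 1/(n+1) := by positivity
    have : sInf S < t + 1/(n+1) := lt_of_le_of_lt h (by linarith)
    obtain ⟨y, hyS, hy⟩ := exists_lt_of_csInf_lt hne this
    exact le_trans hyS (cdf_mono μ X hy.le)
  · intro h
    exact csInf_le hbdd h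

lemma quantile_nonneg (hX0 : ∀ ω, 0 ≤ X ω) {u : ℝ} (hu : u ∈ Ioo (0:ℝ) 1) :
    0 ≤ quantile μ X u :=
  le_csInf (exists_cdf_ge μ hu.2) (fun _ hy => quantile_set_bddBelow μ hX0 u hu.1 hy)

lemma quantile_monoOn (hX0 : ∀ ω, 0 ≤ X ω) : MonotoneOn (quantile μ X) (Ioo (0:ℝ) 1) := by
  intro a ha b hb hab
  apply csInf_le_csInf
  · exact ⟨0, fun y hy => quantile_set_bddBelow μ hX0 a ha.1 hy⟩
  · exact exists_cdf_ge μ hb.2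
  · intro y hy
    exact le_trans hab hy

instance : IsProbabilityMeasure (volume.restrict (Ioo (0:ℝ) 1)) :=
  ⟨by simp [Real.volume_Ioo]⟩

lemma aemeas_quantile (hX0 : ∀ ω, 0 ≤ X ω) :
    AEMeasurable (quantile μ X) (volume.restrict (Ioo (0:ℝ) 1)) :=
  aemeasurable_restrict_of_monotoneOn measurableSet_Ioo (quantile_monoOn μ hX0)

lemma map_quantile (hX : Measurable X) (hX0 : ∀ ω, 0 ≤ X ω) :
    Measure.map (quantile μ X) (volume.restrict (Ioo (0:ℝ) 1)) = Measure.map X μ := by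
  haveI h1 : IsProbabilityMeasure (Measure.map (quantile μ X) (volume.restrict (Ioo (0:ℝ) 1))) :=
    Measure.isProbabilityMeasure_map (aemeas_quantile μ hX0)
  haveI h2 : IsProbabilityMeasure (Measure.map X μ) :=
    Measure.isProbabilityMeasure_map hX.aemeasurable
  apply Measure.ext_of_Iic
  intro t
  set c := (μ {ω | X ω ≤ t}).toReal with hc
  have hc0 : 0 ≤ c := ENNReal.toReal_nonneg
  have hc1 : c ≤ 1 := cdf_le_one μ X t
  have hR : Measure.map X μ (Iic t) = ENNReal.ofReal c := by
    rw [Measure.map_apply hX measurableSet_Iic, hc,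
      ENNReal.ofReal_toReal (measure_ne_top _ _)]
    rfl
  rw [hR, Measure.map_apply_of_aemeasurable (aemeas_quantile μ hX0) measurableSet_Iic,
    Measure.restrict_apply' measurableSet_Ioo]
  have hset : quantile μ X ⁻¹' Iic t ∩ Ioo (0:ℝ) 1 = Iic c ∩ Ioo (0:ℝ) 1 := by
    ext u
    simp only [mem_inter_iff, mem_preimage, mem_Iic, and_congr_left_iff]
    intro hu
    rw [quantile_le_iff μ hX hX0 hu]
  rw [hset]
  rcases lt_or_ge c 1 with h | h
  · have : Iic c ∩ Ioo (0:ℝ) 1 = Ioc 0 c := by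
      ext u
      simp only [mem_inter_iff, mem_Iic, mem_Ioo, mem_Ioc]
      constructor
      · rintro ⟨h1, h2, h3⟩; exact ⟨h2, h1⟩
      · rintro ⟨h1, h2⟩; exact ⟨h2, h1, lt_of_le_of_lt h2 h⟩
    rw [this, Real.volume_Ioc, sub_zero]
  · have hc' : c = 1 := le_antisymm hc1 h
    have : Iic c ∩ Ioo (0:ℝ) 1 = Ioo 0 1 := by
      apply inter_eq_self_of_subset_right
      intro u hu
      simp only [mem_Iic]
      rw [hc']; exact hu.2.le
    rw [this, Real.volume_Ioo, hc']
    norm_num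

lemma integrableOn_quantile (hX : Measurable X) (hX0 : ∀ ω, 0 ≤ X ω) (hXi : Integrable X μ) :
    IntegrableOn (quantile μ X) (Ioo (0:ℝ) 1) volume := by
  have h1 : Integrable id (Measure.map X μ) := by
    rw [integrable_map_measure aestronglyMeasurable_id hX.aemeasurable]
    simpa [Function.comp] using hXi
  rw [← map_quantile μ hX hX0] at h1
  rw [integrable_map_measure aestronglyMeasurable_id (aemeas_quantile μ hX0)] at h1
  simpa [Function.comp, IntegrableOn] using h1
end Q


lemma B2 {p : ℝ} (hp : 1 < p) {t : ℝ} (ht : 0 ≤ t) :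
    ENNReal.ofReal t ^ p = ENNReal.ofReal (p * (p - 1)) *
      ∫⁻ s in Ioi (0:ℝ), ENNReal.ofReal (s ^ (p - 2) * max (t - s) 0) := by
  have hp0 : (0:ℝ) < p := by linarith
  rw [ENNReal.ofReal_rpow_of_nonneg ht hp0.le]
  rcases eq_or_lt_of_le ht with rfl | htpos
  · have h0 : ∀ s ∈ Ioi (0:ℝ), ENNReal.ofReal (s ^ (p-2) * max ((0:ℝ) - s) 0) = 0 := by
      intro s hs
      have hs' := mem_Ioi.mp hs
      rw [show ((0:ℝ) - s) = -s by ring, max_eq_right (by linarith), mul_zero, ofReal_zero]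
    rw [setLIntegral_congr_fun measurableSet_Ioi h0]
    simp [Real.zero_rpow hp0.ne']
  · -- t > 0
    have hprod : ∀ s : ℝ, 0 < s → s ^ (p-2) * (t - s) = t * s ^ (p-2) - s ^ (p-1) := by
      intro s hs0
      have hss : s ^ (p-2) * s = s ^ (p-1) := by
        rw [show p - 1 = p - 2 + 1 by ring, Real.rpow_add_one hs0.ne' (p-2)]
      rw [mul_sub, hss]; ring
    have hind : ∀ s ∈ Ioi (0:ℝ), ENNReal.ofReal (s ^ (p-2) * max (t - s) 0) =
        (Ioo (0:ℝ) t).indicator (fun s => ENNReal.ofReal (s ^ (p-2) * (t - s))) s := by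
      intro s hs
      rw [mem_Ioi] at hs
      rcases lt_or_ge s t with h | h
      · rw [indicator_of_mem (by exact ⟨hs, h⟩ : s ∈ Ioo 0 t)]
        rw [max_eq_left (by linarith)]
      · rw [indicator_of_notMem (by simp [mem_Ioo]; intro _; linarith)]
        rw [max_eq_right (by linarith), mul_zero]
        simp
    rw [setLIntegral_congr_fun measurableSet_Ioi hind,
      lintegral_indicator measurableSet_Ioo, Measure.restrict_restrict measurableSet_Ioo,
      inter_eq_left.2 (fun s hs => mem_Ioi.mpr hs.1)]
    have hInt : IntegrableOn (fun s => s ^ (p-2) * (t - s)) (Ioo 0 t) volume := by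
      have h1 : IntegrableOn (fun s : ℝ => t * s ^ (p-2)) (Ioo 0 t) volume := by
        have := (intervalIntegral.intervalIntegrable_rpow'
          (by linarith : (-1:ℝ) < p - 2) (a := 0) (b := t))
        rw [intervalIntegrable_iff, uIoc_of_le htpos.le] at this
        exact (this.mono_set Ioo_subset_Ioc_self).const_mul t
      have h2 : IntegrableOn (fun s : ℝ => s ^ (p-1)) (Ioo 0 t) volume := by
        have := (intervalIntegral.intervalIntegrable_rpow'
          (by linarith : (-1:ℝ) < p - 1) (a := 0) (b := t))
        rw [intervalIntegrable_iff, uIoc_of_le htpos.le] at this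
        exact this.mono_set Ioo_subset_Ioc_self
      apply IntegrableOn.congr_fun (h1.sub h2) ?_ measurableSet_Ioo
      intro s hs
      simp only [Pi.sub_apply]
      rw [hprod s hs.1]
    have hnn : 0 ≤ᵐ[volume.restrict (Ioo (0:ℝ) t)] fun s => s ^ (p-2) * (t - s) := by
      filter_upwards [ae_restrict_mem measurableSet_Ioo] with s hs
      exact mul_nonneg (Real.rpow_nonneg hs.1.le _) (by linarith [hs.2])
    rw [← ofReal_integral_eq_lintegral_ofReal hInt hnn]
    have hval : ∫ s in Ioo (0:ℝ) t, s ^ (p-2) * (t - s) = t ^ p / (p * (p-1)) := by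
      have heq : ∫ s in Ioo (0:ℝ) t, s ^ (p-2) * (t - s)
          = ∫ s in (0:ℝ)..t, (t * s ^ (p-2) - s ^ (p-1)) := by
        rw [intervalIntegral.integral_of_le htpos.le, ← integral_Ioc_eq_integral_Ioo]
        apply setIntegral_congr_fun measurableSet_Ioc
        intro s hs
        exact hprod s hs.1
      rw [heq]
      have i1 : IntervalIntegrable (fun s : ℝ => t * s ^ (p-2)) volume 0 t :=
        (intervalIntegral.intervalIntegrable_rpow' (by linarith)).const_mul t
      have i2 : IntervalIntegrable (fun s : ℝ => s ^ (p-1)) volume 0 t :=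
        intervalIntegral.intervalIntegrable_rpow' (by linarith)
      rw [intervalIntegral.integral_sub i1 i2, intervalIntegral.integral_const_mul,
        integral_rpow (Or.inl (by linarith : (-1:ℝ) < p - 2)),
        integral_rpow (Or.inl (by linarith : (-1:ℝ) < p - 1))]
      rw [show p - 2 + 1 = p - 1 by ring, show p - 1 + 1 = p by ring,
        Real.zero_rpow (by intro h; linarith : p - 1 ≠ 0),
        Real.zero_rpow (by intro h; linarith : p ≠ 0), sub_zero, sub_zero]
      have htt : t * t ^ (p-1) = t ^ p := by
        rw [mul_comm, ← Real.rpow_add_one htpos.ne' (p-1), show p - 1 + 1 = p by ring]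
      have h1 : p ≠ 0 := hp0.ne'
      have h2 : p - 1 ≠ 0 := by intro h; linarith
      rw [← mul_div_assoc, htt]
      field_simp
      ring
    rw [hval, ← ENNReal.ofReal_mul (by nlinarith : (0:ℝ) ≤ p * (p-1))]
    congr 1
    have h1 : p ≠ 0 := hp0.ne'
    have h2 : p - 1 ≠ 0 := by intro h; linarith
    field_simp

lemma B1 {G H : ℝ → ℝ} (hGmono : MonotoneOn G (Ioo (0:ℝ) 1))
    (hGint : IntegrableOn G (Ioo (0:ℝ) 1) volume)
    (hHint : IntegrableOn H (Ioo (0:ℝ) 1) volume)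
    (hcond : ∀ α ∈ Ico (0:ℝ) 1, ∫ u in Ioo α 1, G u ≤ ∫ u in Ioo α 1, H u)
    (s : ℝ) :
    ∫ u in Ioo (0:ℝ) 1, max (G u - s) 0 ≤ ∫ u in Ioo (0:ℝ) 1, max (H u - s) 0 := by
  have hHp_int : IntegrableOn (fun u => max (H u - s) 0) (Ioo (0:ℝ) 1) volume :=
    (hHint.sub (integrableOn_const (by simp [Real.volume_Ioo]))).pos_part
  have hGp_int : IntegrableOn (fun u => max (G u - s) 0) (Ioo (0:ℝ) 1) volume :=
    (hGint.sub (integrableOn_const (by simp [Real.volume_Ioo]))).pos_part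
  have hRHS0 : 0 ≤ ∫ u in Ioo (0:ℝ) 1, max (H u - s) 0 :=
    integral_nonneg (fun u => le_max_right _ _)
  set A := ({0} : Set ℝ) ∪ {u | u ∈ Ioo (0:ℝ) 1 ∧ G u ≤ s} with hA
  have hbdd : BddAbove A := by
    refine ⟨1, ?_⟩
    rintro y (rfl | ⟨hy, _⟩)
    · norm_num
    · exact hy.2.le
  have hneA : A.Nonempty := ⟨0, Or.inl rfl⟩
  set α := sSup A with hαdef
  have hα0 : 0 ≤ α := le_csSup hbdd (Or.inl rfl)
  have hα1 : α ≤ 1 := csSup_le hneA (by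
    rintro y (rfl | ⟨hy, _⟩)
    exacts [by norm_num, hy.2.le])
  have hlt : ∀ u ∈ Ioo (0:ℝ) 1, u < α → G u ≤ s := by
    intro u hu hua
    obtain ⟨v, hvA, huv⟩ := exists_lt_of_lt_csSup hneA hua
    rcases hvA with rfl | ⟨hv, hGv⟩
    · linarith [hu.1]
    · exact le_trans (hGmono hu hv huv.le) hGv
  have hgt : ∀ u ∈ Ioo (0:ℝ) 1, α < u → s < G u := by
    intro u hu hau
    by_contra hc
    push_neg at hc
    exact absurd (le_csSup hbdd (Or.inr ⟨hu, hc⟩)) (not_le.2 hau)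
  rcases eq_or_lt_of_le hα1 with hαeq | hαlt
  · -- α = 1 : G ≤ s everywhere on (0,1)
    have : ∫ u in Ioo (0:ℝ) 1, max (G u - s) 0 = 0 := by
      rw [setIntegral_congr_fun measurableSet_Ioo
        (g := fun _ => (0:ℝ)) (fun u hu => by
          have := hlt u hu (hαeq ▸ hu.2)
          simp [max_eq_right (by linarith : G u - s ≤ 0)])]
      simp
    rw [this]; exact hRHS0
  · -- α < 1
    have hαIco : α ∈ Ico (0:ℝ) 1 := ⟨hα0, hαlt⟩
    have hsplit : Ioo (0:ℝ) 1 = Ioc 0 α ∪ Ioo α 1 := by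
      ext u
      simp only [mem_Ioo, mem_union, mem_Ioc]
      constructor
      · rintro ⟨h1, h2⟩
        rcases le_or_gt u α with h | h
        · exact Or.inl ⟨h1, h⟩
        · exact Or.inr ⟨h, h2⟩
      · rintro (⟨h1, h2⟩ | ⟨h1, h2⟩)
        · exact ⟨h1, lt_of_le_of_lt h2 hαlt⟩
        · exact ⟨lt_of_le_of_lt hα0 h1, h2⟩
    have hdisj : Disjoint (Ioc (0:ℝ) α) (Ioo α 1) := by
      apply Set.disjoint_left.2
      rintro u ⟨_, h2⟩ ⟨h3, _⟩
      linarith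
    have hne_ae : ∀ᵐ u ∂(volume.restrict (Ioc (0:ℝ) α)), u ≠ α := by
      rw [ae_iff]
      have h1 : {u : ℝ | ¬ u ≠ α} = {α} := by ext u; simp
      rw [h1]
      exact le_antisymm (le_trans (Measure.restrict_le_self _)
        (by simp)) zero_le
    have hzero : ∫ u in Ioc (0:ℝ) α, max (G u - s) 0 = 0 := by
      have heq : (fun u => max (G u - s) 0) =ᵐ[volume.restrict (Ioc (0:ℝ) α)]
          (fun _ => (0:ℝ)) := by
        filter_upwards [ae_restrict_mem measurableSet_Ioc, hne_ae] with u hu hune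
        have hu' : u ∈ Ioo (0:ℝ) 1 := ⟨hu.1, lt_of_le_of_lt (hu.2) hαlt⟩
        have : u < α := lt_of_le_of_ne hu.2 hune
        have := hlt u hu' this
        simp [max_eq_right (by linarith : G u - s ≤ 0)]
      rw [integral_congr_ae heq]
      simp
    have hGsub : IntegrableOn (fun u => max (G u - s) 0) (Ioo α 1) volume :=
      hGp_int.mono_set (by
        intro u hu
        exact ⟨lt_of_le_of_lt hα0 hu.1, hu.2⟩)
    have hkey1 : ∫ u in Ioo (0:ℝ) 1, max (G u - s) 0 = ∫ u in Ioo α 1, max (G u - s) 0 := by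
      rw [hsplit, setIntegral_union hdisj measurableSet_Ioo
        (hGp_int.mono_set (hsplit ▸ subset_union_left)) hGsub, hzero, zero_add]
    have hkey2 : ∫ u in Ioo α 1, max (G u - s) 0 = ∫ u in Ioo α 1, (G u - s) := by
      apply setIntegral_congr_fun measurableSet_Ioo
      intro u hu
      have hu' : u ∈ Ioo (0:ℝ) 1 := ⟨lt_of_le_of_lt hα0 hu.1, hu.2⟩
      have := hgt u hu' hu.1
      simp [max_eq_left (by linarith : (0:ℝ) ≤ G u - s)]
    have hconst : IntegrableOn (fun _ : ℝ => s) (Ioo α 1) volume :=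
      integrableOn_const (by simp [Real.volume_Ioo])
    have hGI : IntegrableOn G (Ioo α 1) volume :=
      hGint.mono_set (fun u hu => ⟨lt_of_le_of_lt hα0 hu.1, hu.2⟩)
    have hHI : IntegrableOn H (Ioo α 1) volume :=
      hHint.mono_set (fun u hu => ⟨lt_of_le_of_lt hα0 hu.1, hu.2⟩)
    have hGsplit : ∫ u in Ioo α 1, (G u - s) = (∫ u in Ioo α 1, G u) - s * (1 - α) := by
      rw [integral_sub hGI hconst, setIntegral_const]
      simp [Real.volume_Ioo, ENNReal.toReal_ofReal (by linarith : (0:ℝ) ≤ 1 - α), mul_comm, hα1]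
    have hHsplit : ∫ u in Ioo α 1, (H u - s) = (∫ u in Ioo α 1, H u) - s * (1 - α) := by
      rw [integral_sub hHI hconst, setIntegral_const]
      simp [Real.volume_Ioo, ENNReal.toReal_ofReal (by linarith : (0:ℝ) ≤ 1 - α), mul_comm, hα1]
    have hHs_int : IntegrableOn (fun u => H u - s) (Ioo α 1) volume := hHI.sub hconst
    have hHp_int' : IntegrableOn (fun u => max (H u - s) 0) (Ioo α 1) volume :=
      hHp_int.mono_set (fun u hu => ⟨lt_of_le_of_lt hα0 hu.1, hu.2⟩)
    calc ∫ u in Ioo (0:ℝ) 1, max (G u - s) 0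
        = ∫ u in Ioo α 1, (G u - s) := by rw [hkey1, hkey2]
      _ = (∫ u in Ioo α 1, G u) - s * (1 - α) := hGsplit
      _ ≤ (∫ u in Ioo α 1, H u) - s * (1 - α) := by linarith [hcond α hαIco]
      _ = ∫ u in Ioo α 1, (H u - s) := hHsplit.symm
      _ ≤ ∫ u in Ioo α 1, max (H u - s) 0 :=
          integral_mono hHs_int hHp_int' (fun u => le_max_left _ _)
      _ ≤ ∫ u in Ioo (0:ℝ) 1, max (H u - s) 0 := by
          apply setIntegral_mono_set hHp_int
          · filter_upwards with u using le_max_right _ _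
          · filter_upwards with u hu using ⟨lt_of_le_of_lt hα0 hu.1, hu.2⟩

lemma reprP {p : ℝ} (hp : 1 < p) {K k : ℝ → ℝ} (hk : Measurable k)
    (hae : K =ᵐ[volume.restrict (Ioo (0:ℝ) 1)] k)
    (hK0 : 0 ≤ᵐ[volume.restrict (Ioo (0:ℝ) 1)] K)
    (hKint : IntegrableOn K (Ioo (0:ℝ) 1) volume) :
    ∫⁻ u in Ioo (0:ℝ) 1, ENNReal.ofReal (K u) ^ p
      = ENNReal.ofReal (p * (p - 1)) * ∫⁻ s in Ioi (0:ℝ),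
          ENNReal.ofReal (s ^ (p - 2)) *
            ENNReal.ofReal (∫ u in Ioo (0:ℝ) 1, max (K u - s) 0) := by
  have hmeas : Measurable (fun z : ℝ × ℝ =>
      ENNReal.ofReal (z.2 ^ (p-2) * max (k z.1 - z.2) 0)) := by
    apply ENNReal.measurable_ofReal.comp
    exact (measurable_snd.pow_const _).mul
      (((hk.comp measurable_fst).sub measurable_snd).max measurable_const)
  have step1 : ∫⁻ u in Ioo (0:ℝ) 1, ENNReal.ofReal (K u) ^ p
      = ∫⁻ u in Ioo (0:ℝ) 1, ENNReal.ofReal (p * (p - 1)) *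
          ∫⁻ s in Ioi (0:ℝ), ENNReal.ofReal (s ^ (p - 2) * max (k u - s) 0) := by
    apply lintegral_congr_ae
    filter_upwards [hae, hK0] with u h1 h2
    rw [h1] at h2 ⊢
    exact B2 hp h2
  rw [step1, lintegral_const_mul' _ _ ofReal_ne_top]
  congr 1
  rw [lintegral_lintegral_swap (hmeas.aemeasurable)]
  apply lintegral_congr_ae
  filter_upwards [ae_restrict_mem measurableSet_Ioi] with s hs
  have hs0 : (0:ℝ) < s := mem_Ioi.mp hs
  have hrnn : 0 ≤ s ^ (p-2) := Real.rpow_nonneg hs0.le _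
  have inner1 : ∫⁻ u in Ioo (0:ℝ) 1, ENNReal.ofReal (s ^ (p-2) * max (k u - s) 0)
      = ENNReal.ofReal (s ^ (p-2)) * ∫⁻ u in Ioo (0:ℝ) 1, ENNReal.ofReal (max (k u - s) 0) := by
    rw [← lintegral_const_mul' _ _ ofReal_ne_top]
    apply lintegral_congr_ae
    filter_upwards with u
    rw [ENNReal.ofReal_mul hrnn]
  rw [inner1]
  congr 1
  have inner2 : ∫⁻ u in Ioo (0:ℝ) 1, ENNReal.ofReal (max (k u - s) 0)
      = ∫⁻ u in Ioo (0:ℝ) 1, ENNReal.ofReal (max (K u - s) 0) := by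
    apply lintegral_congr_ae
    filter_upwards [hae] with u h1
    rw [h1]
  have hint : IntegrableOn (fun u => max (K u - s) 0) (Ioo (0:ℝ) 1) volume := by
    have h0 : IntegrableOn (fun _ : ℝ => s) (Ioo (0:ℝ) 1) volume :=
      integrableOn_const (by simp [Real.volume_Ioo])
    have := (hKint.sub h0).pos_part
    simpa [IntegrableOn] using this
  rw [inner2, ← ofReal_integral_eq_lintegral_ofReal hint
    (Filter.Eventually.of_forall (fun u => le_max_right _ _))]

lemma keyB {G H : ℝ → ℝ} (hGmono : MonotoneOn G (Ioo (0:ℝ) 1))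
    (hG0 : 0 ≤ᵐ[volume.restrict (Ioo (0:ℝ) 1)] G)
    (hGint : IntegrableOn G (Ioo (0:ℝ) 1) volume)
    (hH : Measurable H)
    (hH0 : 0 ≤ᵐ[volume.restrict (Ioo (0:ℝ) 1)] H)
    (hHint : IntegrableOn H (Ioo (0:ℝ) 1) volume)
    (hcond : ∀ α ∈ Ico (0:ℝ) 1, ∫ u in Ioo α 1, G u ≤ ∫ u in Ioo α 1, H u)
    {p : ℝ} (hp : 1 ≤ p) :
    ∫⁻ u in Ioo (0:ℝ) 1, ENNReal.ofReal (G u) ^ p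
      ≤ ∫⁻ u in Ioo (0:ℝ) 1, ENNReal.ofReal (H u) ^ p := by
  rcases eq_or_lt_of_le hp with rfl | hp1
  · simp only [ENNReal.rpow_one]
    rw [← ofReal_integral_eq_lintegral_ofReal hGint hG0,
      ← ofReal_integral_eq_lintegral_ofReal hHint hH0]
    exact ENNReal.ofReal_le_ofReal (hcond 0 ⟨le_refl _, one_pos⟩)
  · have hGaem : AEMeasurable G (volume.restrict (Ioo (0:ℝ) 1)) :=
      aemeasurable_restrict_of_monotoneOn measurableSet_Ioo hGmono
    rw [reprP hp1 hGaem.measurable_mk hGaem.ae_eq_mk hG0 hGint,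
      reprP hp1 hH (Filter.EventuallyEq.refl _ H) hH0 hHint]
    apply mul_le_mul_right
    apply lintegral_mono
    intro s
    exact mul_le_mul_right (ENNReal.ofReal_le_ofReal
      (B1 hGmono hGint hHint hcond s)) _

lemma sigma_tail {σ : ℝ → ℝ} (hσ0 : ∀ u ∈ Icc (0:ℝ) 1, 0 ≤ σ u)
    (hσm : MonotoneOn σ (Icc (0:ℝ) 1)) (hσInt : IntervalIntegrable σ volume 0 1)
    (hσ1 : (∫ u in (0:ℝ)..1, σ u) = 1) {α : ℝ} (hα : α ∈ Ico (0:ℝ) 1) :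
    1 - α ≤ ∫ u in α..1, σ u := by
  have hα0 := hα.1
  have hα1 : α ≤ 1 := hα.2.le
  have i1 : IntervalIntegrable σ volume 0 α := hσInt.mono_set
    (by rw [uIcc_of_le hα0, uIcc_of_le zero_le_one]; exact Icc_subset_Icc_right hα1)
  have i2 : IntervalIntegrable σ volume α 1 := hσInt.mono_set
    (by rw [uIcc_of_le hα1, uIcc_of_le zero_le_one]; exact Icc_subset_Icc_left hα0)
  have hadj : (∫ u in (0:ℝ)..α, σ u) + ∫ u in α..1, σ u = 1 := by
    rw [intervalIntegral.integral_add_adjacent_intervals i1 i2]; exact hσ1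
  have hs0 : 0 ≤ σ α := hσ0 α ⟨hα0, hα1⟩
  have b1 : ∫ u in (0:ℝ)..α, σ u ≤ α * σ α := by
    have := intervalIntegral.integral_mono_on (g := fun _ => σ α) hα0 i1
      intervalIntegrable_const
      (fun x hx => hσm ⟨hx.1, le_trans hx.2 hα1⟩ ⟨hα0, hα1⟩ hx.2)
    simpa [intervalIntegral.integral_const, smul_eq_mul, sub_zero] using this
  have b2 : (1 - α) * σ α ≤ ∫ u in α..1, σ u := by
    have := intervalIntegral.integral_mono_on (f := fun _ => σ α) hα1
      intervalIntegrable_const i2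
      (fun x hx => hσm ⟨hα0, hα1⟩ ⟨le_trans hα0 hx.1, hx.2⟩ hx.1)
    simpa [intervalIntegral.integral_const, smul_eq_mul] using this
  nlinarith [mul_le_mul_of_nonneg_left b1 (by linarith : (0:ℝ) ≤ 1 - α),
    mul_le_mul_of_nonneg_left b2 hα0]

end Aux

open Set Filter in
/-- for a spectral function σ ∈ L^q (1 ≤ q ≤ ∞), ‖Z‖_q ≤ ‖Z‖_σ*·‖σ‖_q
whenever ‖Z‖_σ* < ∞; moreover if σ ∈ L^∞ then ‖Z‖_∞/‖σ‖_∞ ≤ ‖Z‖_σ* ≤ ‖Z‖_∞, so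
L_σ* = L^∞ with equivalent norms. -/
theorem stmt18 {Ω : Type*} [MeasurableSpace Ω] (μ : Measure Ω) [IsProbabilityMeasure μ]
    (σ : ℝ → ℝ) (hσ0 : ∀ u ∈ Set.Icc (0 : ℝ) 1, 0 ≤ σ u)
    (hσm : MonotoneOn σ (Set.Icc (0 : ℝ) 1)) (hσmeas : Measurable σ)
    (hσ1 : (∫ u in (0 : ℝ)..1, σ u) = 1)
    (q : ℝ≥0∞) (hq : 1 ≤ q)
    (Z : Ω → ℝ) (hZm : Measurable Z) (hZi : Integrable Z μ)
    (hZfin : ∃ η : ℝ, 0 ≤ η ∧ ∀ α ∈ Set.Ico (0 : ℝ) 1,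
      avar μ (fun ω => |Z ω|) α ≤ η / (1 - α) * ∫ u in α..1, σ u) :
    eLpNorm Z q μ ≤ ENNReal.ofReal (sigmaDualNorm μ σ Z) *
      eLpNorm σ q (volume.restrict (Set.Ioo (0 : ℝ) 1)) ∧
    (eLpNorm σ ⊤ (volume.restrict (Set.Ioo (0 : ℝ) 1)) < ⊤ →
      eLpNorm Z ⊤ μ ≤ ENNReal.ofReal (sigmaDualNorm μ σ Z) *
        eLpNorm σ ⊤ (volume.restrict (Set.Ioo (0 : ℝ) 1)) ∧
      ENNReal.ofReal (sigmaDualNorm μ σ Z) ≤ eLpNorm Z ⊤ μ) := by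
  classical
  set W : Ω → ℝ := fun ω => |Z ω| with hWdef
  have hW : Measurable W := hZm.abs
  have hW0 : ∀ ω, 0 ≤ W ω := fun ω => abs_nonneg _
  have hWi : Integrable W μ := hZi.abs
  set G : ℝ → ℝ := quantile μ W with hGdef
  have hGmono : MonotoneOn G (Ioo (0:ℝ) 1) := quantile_monoOn μ hW0
  have hG0 : ∀ u ∈ Ioo (0:ℝ) 1, 0 ≤ G u := fun u hu => quantile_nonneg μ hW0 hu
  have hG0ae : 0 ≤ᵐ[volume.restrict (Ioo (0:ℝ) 1)] G := by
    filter_upwards [ae_restrict_mem measurableSet_Ioo] with u hu using hG0 u hu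
  have hGint : IntegrableOn G (Ioo (0:ℝ) 1) volume := integrableOn_quantile μ hW hW0 hWi
  have hGaem : AEMeasurable G (volume.restrict (Ioo (0:ℝ) 1)) :=
    aemeasurable_restrict_of_monotoneOn measurableSet_Ioo hGmono
  have hmap : Measure.map G (volume.restrict (Ioo (0:ℝ) 1)) = Measure.map W μ :=
    map_quantile μ hW hW0
  -- σ integrability
  have hσInt : IntervalIntegrable σ volume 0 1 := by
    by_contra hc
    rw [intervalIntegral.integral_undef hc] at hσ1
    exact one_ne_zero hσ1.symm
  have hσIoc : IntegrableOn σ (Set.Ioc 0 1) volume := by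
    have := hσInt
    rwa [intervalIntegrable_iff, uIoc_of_le zero_le_one] at this
  have hσIoo : IntegrableOn σ (Ioo (0:ℝ) 1) volume := hσIoc.mono_set Set.Ioo_subset_Ioc_self
  have hσ0ae : 0 ≤ᵐ[volume.restrict (Ioo (0:ℝ) 1)] σ := by
    filter_upwards [ae_restrict_mem measurableSet_Ioo] with u hu
    exact hσ0 u ⟨hu.1.le, hu.2.le⟩
  have hconv : ∀ (f : ℝ → ℝ) (α : ℝ), α ≤ 1 →
      (∫ u in α..1, f u) = ∫ u in Set.Ioo α 1, f u := by
    intro f α hα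
    rw [intervalIntegral.integral_of_le hα, integral_Ioc_eq_integral_Ioo]
  -- the admissible set
  set A := {η : ℝ | 0 ≤ η ∧ ∀ α ∈ Set.Ico (0:ℝ) 1,
      avar μ W α ≤ η / (1 - α) * ∫ u in α..1, σ u} with hAdef
  have hsdn : sigmaDualNorm μ σ Z = sInf A := rfl
  have hAne : A.Nonempty := hZfin
  have hAbdd : BddBelow A := ⟨0, fun η hη => hη.1⟩
  set η := sInf A with hηdef
  have hη0 : 0 ≤ η := le_csInf hAne fun b hb => hb.1
  have hηcond : ∀ α ∈ Set.Ico (0:ℝ) 1, avar μ W α ≤ η / (1 - α) * ∫ u in α..1, σ u := by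
    intro α hα
    have h1α : 0 < 1 - α := by linarith [hα.2]
    have hc0 : 0 ≤ ∫ u in α..1, σ u := intervalIntegral.integral_nonneg (by linarith [hα.2])
      (fun u hu => hσ0 u ⟨le_trans hα.1 hu.1, hu.2⟩)
    rcases eq_or_lt_of_le hc0 with hc | hc
    · obtain ⟨η₀, hη₀⟩ := hAne
      have h2 := hη₀.2 α hα
      rw [← hc, mul_zero] at h2 ⊢
      exact h2
    · have hub : ∀ η' ∈ A, avar μ W α * (1 - α) / (∫ u in α..1, σ u) ≤ η' := by
        intro η' hη'
        have h2 := hη'.2 α hα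
        rw [div_mul_eq_mul_div, le_div_iff₀ h1α] at h2
        rw [div_le_iff₀ hc]
        exact h2
      have hle := le_csInf hAne hub
      rw [div_mul_eq_mul_div, le_div_iff₀ h1α]
      exact (div_le_iff₀ hc).1 hle
  have hGtail : ∀ α ∈ Set.Ico (0:ℝ) 1,
      ∫ u in Set.Ioo α 1, G u ≤ ∫ u in Set.Ioo α 1, η * σ u := by
    intro α hα
    have h1α : 0 < 1 - α := by linarith [hα.2]
    have h := hηcond α hα
    have havar : avar μ W α = (1 - α)⁻¹ * ∫ u in α..1, G u := rfl
    rw [havar] at h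
    have h2 : ∫ u in α..1, G u ≤ η * ∫ u in α..1, σ u := by
      have h' := mul_le_mul_of_nonneg_left h (le_of_lt h1α)
      calc ∫ u in α..1, G u = (1-α) * ((1-α)⁻¹ * ∫ u in α..1, G u) := by
            field_simp
        _ ≤ (1-α) * (η / (1-α) * ∫ u in α..1, σ u) := h'
        _ = η * ∫ u in α..1, σ u := by field_simp
    rw [hconv G α (by linarith [hα.2]), hconv σ α (by linarith [hα.2])] at h2
    rw [MeasureTheory.integral_const_mul]
    exact h2
  -- degenerate case η = 0
  rcases eq_or_lt_of_le hη0 with hηz | hηpos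
  · have h0 := hGtail 0 ⟨le_refl _, one_pos⟩
    rw [← hηz] at h0
    simp only [zero_mul, integral_zero] at h0
    have hGzero : G =ᵐ[volume.restrict (Ioo (0:ℝ) 1)] 0 :=
      (integral_eq_zero_iff_of_nonneg_ae hG0ae hGint).1
        (le_antisymm h0 (integral_nonneg_of_ae hG0ae))
    have hnull : volume ({u | G u ≠ 0} ∩ Ioo (0:ℝ) 1) = 0 := by
      have h1 := hGzero
      rw [EventuallyEq, ae_iff, Measure.restrict_apply' measurableSet_Ioo] at h1
      simpa using h1
    have hZ0 : Z =ᵐ[μ] 0 := by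
      rw [EventuallyEq, ae_iff]
      have h1 : {ω | ¬ Z ω = (0 : Ω → ℝ) ω} = W ⁻¹' (Set.Ioi 0) := by
        ext ω; simp [hWdef, abs_pos]
      rw [h1, ← Measure.map_apply hW measurableSet_Ioi, ← hmap,
        Measure.map_apply_of_aemeasurable hGaem measurableSet_Ioi,
        Measure.restrict_apply' measurableSet_Ioo]
      apply measure_mono_null ?_ hnull
      intro u hu
      exact ⟨ne_of_gt hu.1, hu.2⟩
    rw [hsdn, ← hηz]
    simp only [ENNReal.ofReal_zero, zero_mul]
    have hz : ∀ r : ℝ≥0∞, eLpNorm Z r μ = 0 := fun r => by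
      rw [eLpNorm_congr_ae hZ0, eLpNorm_zero]
    exact ⟨by rw [hz], fun _ => ⟨by rw [hz], zero_le⟩⟩
  · -- η > 0
    -- part 2b : ofReal η ≤ eLpNorm Z ⊤ μ
    have part2b : ENNReal.ofReal η ≤ eLpNorm Z ⊤ μ := by
      rcases eq_or_ne (eLpNorm Z ⊤ μ) ⊤ with htop | htop
      · rw [htop]; exact le_top
      set M := (eLpNorm Z ⊤ μ).toReal with hMdef
      have hM0 : 0 ≤ M := ENNReal.toReal_nonneg
      have hZb : ∀ᵐ ω ∂μ, W ω ≤ M := by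
        have h := enorm_ae_le_eLpNormEssSup Z μ
        rw [← eLpNorm_exponent_top] at h
        filter_upwards [h] with ω hω
        have h2 : ENNReal.ofReal |Z ω| ≤ eLpNorm Z ⊤ μ := by
          rwa [← Real.enorm_eq_ofReal_abs]
        exact (ENNReal.ofReal_le_iff_le_toReal htop).1 h2
      have hFM : (μ {ω | W ω ≤ M}).toReal = 1 := by
        have hcz : μ {ω | ¬ W ω ≤ M} = 0 := ae_iff.mp hZb
        have hs : MeasurableSet {ω | W ω ≤ M} := hW measurableSet_Iic
        have h2 : μ {ω | W ω ≤ M} = 1 := by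
          have := measure_add_measure_compl (μ := μ) hs
          have hC : {ω | W ω ≤ M}ᶜ = {ω | ¬ W ω ≤ M} := rfl
          rw [hC, hcz, add_zero, measure_univ] at this
          exact this
        rw [h2]; simp
      have hGM : ∀ u ∈ Ioo (0:ℝ) 1, G u ≤ M := fun u hu =>
        (quantile_le_iff μ hW hW0 hu).2 (by rw [hFM]; exact hu.2.le)
      have hMA : M ∈ A := by
        refine ⟨hM0, fun α hα => ?_⟩
        have h1α : 0 < 1 - α := by linarith [hα.2]
        have hσT := sigma_tail hσ0 hσm hσInt hσ1 hα
        have hGub : ∫ u in α..1, G u ≤ M * (1 - α) := by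
          rw [hconv G α (by linarith [hα.2])]
          have hmono : ∫ u in Set.Ioo α 1, G u ≤ ∫ _u in Set.Ioo α 1, M := by
            apply integral_mono_ae
              (hGint.mono_set (fun v hv => ⟨lt_of_le_of_lt hα.1 hv.1, hv.2⟩))
              (integrableOn_const (by simp [Real.volume_Ioo]))
            filter_upwards [ae_restrict_mem measurableSet_Ioo] with v hv
            exact hGM v ⟨lt_of_le_of_lt hα.1 hv.1, hv.2⟩
          calc ∫ u in Set.Ioo α 1, G u ≤ ∫ _u in Set.Ioo α 1, M := hmono
            _ = M * (1 - α) := by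
              rw [setIntegral_const]
              simp [Real.volume_Ioo, ENNReal.toReal_ofReal h1α.le, mul_comm, hα.2.le]
        have havar : avar μ W α = (1 - α)⁻¹ * ∫ u in α..1, G u := rfl
        rw [havar]
        calc (1 - α)⁻¹ * ∫ u in α..1, G u ≤ (1 - α)⁻¹ * (M * (1 - α)) :=
              mul_le_mul_of_nonneg_left hGub (inv_nonneg.2 h1α.le)
          _ = M := by field_simp
          _ ≤ M / (1 - α) * ∫ u in α..1, σ u := by
              rw [div_mul_eq_mul_div, le_div_iff₀ h1α]
              calc M * (1 - α) ≤ M * ∫ u in α..1, σ u :=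
                    mul_le_mul_of_nonneg_left hσT hM0
                _ = (∫ u in α..1, σ u) * M := by ring
                _ = M * (∫ u in α..1, σ u) := by ring
      have hle : η ≤ M := csInf_le hAbdd hMA
      calc ENNReal.ofReal η ≤ ENNReal.ofReal M := ENNReal.ofReal_le_ofReal hle
        _ = eLpNorm Z ⊤ μ := ENNReal.ofReal_toReal htop
    -- part 2a : under finiteness of ‖σ‖∞
    have part2a : eLpNorm σ ⊤ (volume.restrict (Set.Ioo (0:ℝ) 1)) < ⊤ →
        eLpNorm Z ⊤ μ ≤ ENNReal.ofReal η *
          eLpNorm σ ⊤ (volume.restrict (Set.Ioo (0:ℝ) 1)) := by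
      intro hσfin
      set sInfty := (eLpNorm σ ⊤ (volume.restrict (Set.Ioo (0:ℝ) 1))).toReal with hsdef
      have hs0 : 0 ≤ sInfty := ENNReal.toReal_nonneg
      have hσbd : ∀ᵐ u ∂(volume.restrict (Ioo (0:ℝ) 1)), σ u ≤ sInfty := by
        have h := enorm_ae_le_eLpNormEssSup σ (volume.restrict (Ioo (0:ℝ) 1))
        rw [← eLpNorm_exponent_top] at h
        filter_upwards [h] with u hu
        have h2 : ENNReal.ofReal |σ u| ≤ eLpNorm σ ⊤ (volume.restrict (Ioo (0:ℝ) 1)) := by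
          rwa [← Real.enorm_eq_ofReal_abs]
        exact le_trans (le_abs_self _) ((ENNReal.ofReal_le_iff_le_toReal hσfin.ne).1 h2)
      have hGub : ∀ u ∈ Ioo (0:ℝ) 1, G u ≤ η * sInfty := by
        intro u hu
        have h1u : 0 < 1 - u := by linarith [hu.2]
        have e1 : G u * (1 - u) ≤ ∫ v in Set.Ioo u 1, G v := by
          have hmono : ∫ _v in Set.Ioo u 1, G u ≤ ∫ v in Set.Ioo u 1, G v := by
            apply integral_mono_ae
              (integrableOn_const (C := G u) (by simp [Real.volume_Ioo]))
              (hGint.mono_set (fun v hv => ⟨lt_trans hu.1 hv.1, hv.2⟩))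
            filter_upwards [ae_restrict_mem measurableSet_Ioo] with v hv
            exact hGmono hu ⟨lt_trans hu.1 hv.1, hv.2⟩ hv.1.le
          calc G u * (1 - u) = ∫ _v in Set.Ioo u 1, G u := by
                rw [setIntegral_const]
                simp [Real.volume_Ioo, ENNReal.toReal_ofReal h1u.le, mul_comm, hu.2.le]
            _ ≤ ∫ v in Set.Ioo u 1, G v := hmono
        have e2 := hGtail u ⟨hu.1.le, hu.2⟩
        have e3 : ∫ v in Set.Ioo u 1, η * σ v ≤ η * sInfty * (1 - u) := by
          rw [MeasureTheory.integral_const_mul]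
          have hσub : ∫ v in Set.Ioo u 1, σ v ≤ sInfty * (1 - u) := by
            have hmono : ∫ v in Set.Ioo u 1, σ v ≤ ∫ _v in Set.Ioo u 1, sInfty := by
              apply integral_mono_ae
                (hσIoo.mono_set (fun v hv => ⟨lt_trans hu.1 hv.1, hv.2⟩))
                (integrableOn_const (by simp [Real.volume_Ioo]))
              exact ae_restrict_of_ae_restrict_of_subset
                (show Set.Ioo u 1 ⊆ Set.Ioo (0:ℝ) 1 from
                  fun v hv => ⟨lt_trans hu.1 hv.1, hv.2⟩) hσbd
            calc ∫ v in Set.Ioo u 1, σ v ≤ ∫ _v in Set.Ioo u 1, sInfty := hmono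
              _ = sInfty * (1 - u) := by
                rw [setIntegral_const]
                simp [Real.volume_Ioo, ENNReal.toReal_ofReal h1u.le, mul_comm, hu.2.le]
          calc η * ∫ v in Set.Ioo u 1, σ v ≤ η * (sInfty * (1 - u)) :=
                mul_le_mul_of_nonneg_left hσub hη0
            _ = η * sInfty * (1 - u) := by ring
        have := le_trans e1 (le_trans e2 e3)
        nlinarith
      have hZbd : ∀ᵐ ω ∂μ, |Z ω| ≤ η * sInfty := by
        rw [ae_iff]
        have hset : {ω | ¬ |Z ω| ≤ η * sInfty} = W ⁻¹' (Set.Ioi (η * sInfty)) := by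
          ext ω; simp [hWdef, not_le]
        rw [hset, ← Measure.map_apply hW measurableSet_Ioi, ← hmap,
          Measure.map_apply_of_aemeasurable hGaem measurableSet_Ioi,
          Measure.restrict_apply' measurableSet_Ioo]
        have hempty : G ⁻¹' (Set.Ioi (η * sInfty)) ∩ Ioo (0:ℝ) 1 = ∅ := by
          ext u
          simp only [mem_inter_iff, mem_preimage, mem_Ioi, mem_empty_iff_false, iff_false,
            not_and]
          intro h1 h2
          exact absurd (hGub u h2) (not_le.2 h1)
        rw [hempty, measure_empty]
      rw [eLpNorm_exponent_top]
      calc eLpNormEssSup Z μ ≤ ENNReal.ofReal (η * sInfty) :=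
            eLpNormEssSup_le_of_ae_bound (by
              filter_upwards [hZbd] with ω hω
              rwa [Real.norm_eq_abs])
        _ = ENNReal.ofReal η * ENNReal.ofReal sInfty := ENNReal.ofReal_mul hη0
        _ = ENNReal.ofReal η * eLpNorm σ ⊤ (volume.restrict (Set.Ioo (0:ℝ) 1)) := by
            rw [hsdef, ENNReal.ofReal_toReal hσfin.ne]
    -- part 1
    have part1 : eLpNorm Z q μ ≤ ENNReal.ofReal η *
        eLpNorm σ q (volume.restrict (Set.Ioo (0:ℝ) 1)) := by
      by_cases hqt : q = ⊤
      · subst hqt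
        by_cases hσfin : eLpNorm σ ⊤ (volume.restrict (Set.Ioo (0:ℝ) 1)) < ⊤
        · exact part2a hσfin
        · rw [not_lt, top_le_iff] at hσfin
          rw [hσfin, ENNReal.mul_top (by
            simp only [ne_eq, ENNReal.ofReal_eq_zero, not_le]
            exact hηpos)]
          exact le_top
      · have hq0 : q ≠ 0 := (lt_of_lt_of_le zero_lt_one hq).ne'
        set p := q.toReal with hpdef
        have hp1 : 1 ≤ p := by
          rw [hpdef, ← ENNReal.toReal_one]
          exact ENNReal.toReal_mono hqt hq
        have hp0 : 0 < p := lt_of_lt_of_le zero_lt_one hp1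
        have hg : Measurable (fun x : ℝ => ENNReal.ofReal x ^ p) :=
          ENNReal.measurable_ofReal.pow_const p
        have htrans : ∫⁻ ω, ‖Z ω‖ₑ ^ p ∂μ
            = ∫⁻ u in Ioo (0:ℝ) 1, ENNReal.ofReal (G u) ^ p := by
          calc ∫⁻ ω, ‖Z ω‖ₑ ^ p ∂μ
              = ∫⁻ ω, ENNReal.ofReal (W ω) ^ p ∂μ := by
                apply lintegral_congr
                intro ω
                rw [Real.enorm_eq_ofReal_abs]
            _ = ∫⁻ x, ENNReal.ofReal x ^ p ∂(Measure.map W μ) :=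
                (lintegral_map' hg.aemeasurable hW.aemeasurable).symm
            _ = ∫⁻ x, ENNReal.ofReal x ^ p
                  ∂(Measure.map G (volume.restrict (Ioo (0:ℝ) 1))) := by rw [hmap]
            _ = ∫⁻ u in Ioo (0:ℝ) 1, ENNReal.ofReal (G u) ^ p :=
                lintegral_map' hg.aemeasurable hGaem
        have hησ0ae : 0 ≤ᵐ[volume.restrict (Ioo (0:ℝ) 1)] (fun u => η * σ u) := by
          filter_upwards [hσ0ae] with u hu
          exact mul_nonneg hη0 hu
        have hkey := keyB hGmono hG0ae hGint (hσmeas.const_mul η) hησ0ae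
          (hσIoo.const_mul η) hGtail hp1
        have hσrhs : ∫⁻ u in Ioo (0:ℝ) 1, ENNReal.ofReal (η * σ u) ^ p
            = ENNReal.ofReal η ^ p * ∫⁻ u in Ioo (0:ℝ) 1, ENNReal.ofReal (σ u) ^ p := by
          rw [← lintegral_const_mul' _ _ (ENNReal.rpow_ne_top_of_nonneg hp0.le ofReal_ne_top)]
          apply lintegral_congr
          intro u
          rw [ENNReal.ofReal_mul hη0, ENNReal.mul_rpow_of_nonneg _ _ hp0.le]
        have hσnorm : eLpNorm σ q (volume.restrict (Set.Ioo (0:ℝ) 1))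
            = (∫⁻ u in Ioo (0:ℝ) 1, ENNReal.ofReal (σ u) ^ p) ^ (1/p) := by
          rw [eLpNorm_eq_lintegral_rpow_enorm_toReal hq0 hqt]
          congr 1
          apply lintegral_congr_ae
          filter_upwards [hσ0ae] with u hu
          rw [Real.enorm_eq_ofReal hu]
        rw [eLpNorm_eq_lintegral_rpow_enorm_toReal hq0 hqt, ← hpdef, htrans, hσnorm]
        calc (∫⁻ u in Ioo (0:ℝ) 1, ENNReal.ofReal (G u) ^ p) ^ (1/p)
            ≤ (∫⁻ u in Ioo (0:ℝ) 1, ENNReal.ofReal (η * σ u) ^ p) ^ (1/p) :=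
              ENNReal.rpow_le_rpow hkey (by positivity)
          _ = (ENNReal.ofReal η ^ p * ∫⁻ u in Ioo (0:ℝ) 1, ENNReal.ofReal (σ u) ^ p)
                ^ (1/p) := by rw [hσrhs]
          _ = ENNReal.ofReal η *
                (∫⁻ u in Ioo (0:ℝ) 1, ENNReal.ofReal (σ u) ^ p) ^ (1/p) := by
              rw [ENNReal.mul_rpow_of_nonneg _ _ (by positivity : (0:ℝ) ≤ 1/p),
                ← ENNReal.rpow_mul, mul_one_div_cancel hp0.ne', ENNReal.rpow_one]
    rw [hsdn]
    exact ⟨part1, fun hσfin => ⟨part2a hσfin, part2b⟩⟩
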